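/- Let $m \geq 1$, $n = 2m$, and $0 \leq \ell \leq m$. Consider the $m$-tuple of dominoes $\boldsymbol{\eta}_a = (\eta_{a_1}, \dots, \eta_{a_m})$ with $a = (0^{m-\ell}, 1^\ell)$, where $\eta_0$ is a horizontal domino and $\eta_1$ a vertical domino, each with content set $\{0, 1\}$. Then every standard filling $\mathbf{T}$ of $\boldsymbol{\eta}_a$ with entries $1, \dots, n$ has at least $M = \sum_{i=1}^{\ell} (m - i)$ inversions, where an inversion is a pair of cells $(x, y)$ with shifted contents satisfying $0 < \tilde{c}(y) - \tilde{c}(x) < m$ and entry of $x$ greater than entry of $y$. -/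

import Mathlib

/-- The shifted content of the cell of content `c ∈ {0,1}` in the `i`-th domino
of an `m`-tuple of dominoes: `c̃ = m·c + i`. -/
def dshift (m : ℕ) (x : Fin m × Fin 2) : ℕ := m * (x.2 : ℕ) + (x.1 : ℕ)

/-- Number of inversions of a filling `T` of an `m`-tuple of dominoes:
pairs of cells `(x,y)` with `0 < c̃(y) - c̃(x) < m` and `T(x) > T(y)`. -/
def dinv (m : ℕ) (T : (Fin m × Fin 2) ≃ Fin (2 * m)) : ℕ :=
  (Finset.univ.filter (fun p : (Fin m × Fin 2) × (Fin m × Fin 2) =>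
    dshift m p.1 < dshift m p.2 ∧ dshift m p.2 < dshift m p.1 + m ∧
      T p.2 < T p.1)).card

/-- A filling of `η_a` with `a = (0^{m-l}, 1^l)` is standard when each domino
is increasing along its row / up its column: for a horizontal domino
(`i < m - l`) the content-0 (left) entry is smaller, and for a vertical domino
(`i ≥ m - l`) the bottom entry is smaller, i.e. its content-0 (top) entry is
larger. -/
def dstd (m l : ℕ) (T : (Fin m × Fin 2) ≃ Fin (2 * m)) : Prop :=
  ∀ i : Fin m, if (i : ℕ) < m - l then T (i, 0) < T (i, 1) else T (i, 1) < T (i, 0)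

/-- every standard filling of the tuple of `m - l` horizontal and
`l` vertical dominoes (each with content set `{0,1}`) has at least
`M = ∑_{i=1}^{l} (m - i)` inversions. -/
theorem stmt11 (m l : ℕ) (hm : 1 ≤ m) (hl : l ≤ m)
    (T : (Fin m × Fin 2) ≃ Fin (2 * m)) (hT : dstd m l T) :
    (∑ i ∈ Finset.range l, (m - (i + 1))) ≤ dinv m T := by
  classical
  set S : Finset (Σ _ : ℕ, ℕ) :=
    (Finset.range l).sigma (fun i => Finset.range (m - (i+1))) with hS
  have hcard : S.card = ∑ i ∈ Finset.range l, (m - (i+1)) := by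
    simp [hS, Finset.card_sigma]
  rw [← hcard, dinv]
  set f : (Σ _ : ℕ, ℕ) → (Fin m × Fin 2) × (Fin m × Fin 2) := fun p =>
    let I : Fin m := ⟨(m - 1 - p.1) % m, Nat.mod_lt _ hm⟩
    let J : Fin m := ⟨p.2 % m, Nat.mod_lt _ hm⟩
    if T (I, 1) < T (J, 1) then ((J, 1), (I, 1)) else ((I, 0), (J, 1)) with hf
  apply Finset.card_le_card_of_injOn f
  · rintro ⟨i, j⟩ hp
    simp only [hS, Finset.mem_coe, Finset.mem_sigma, Finset.mem_range] at hp
    obtain ⟨hi, hj⟩ := hp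
    have hIlt : m - 1 - i < m := by omega
    have hJlt : j < m := by omega
    have hImod : (m - 1 - i) % m = m - 1 - i := Nat.mod_eq_of_lt hIlt
    have hJmod : j % m = j := Nat.mod_eq_of_lt hJlt
    set I : Fin m := ⟨(m - 1 - i) % m, Nat.mod_lt _ hm⟩ with hI
    set J : Fin m := ⟨j % m, Nat.mod_lt _ hm⟩ with hJ
    have hJI : (J : ℕ) < (I : ℕ) := by simp [hI, hJ, hImod, hJmod]; omega
    have hvert : T (I, 1) < T (I, 0) := by
      have := hT I
      rw [if_neg (by simp [hI, hImod]; omega)] at this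
      exact this
    have hne : T (J, (1 : Fin 2)) ≠ T (I, (1 : Fin 2)) := by
      intro h
      have := T.injective h
      have : J = I := (Prod.mk.injEq _ _ _ _ ▸ this).1
      omega
    simp only [hf, Finset.mem_coe, Finset.mem_filter, Finset.mem_univ, true_and]
    split_ifs with hcase
    · refine ⟨?_, ?_, hcase⟩ <;> simp [dshift] <;> omega
    · have h1 : T (J, (1 : Fin 2)) < T (I, (1 : Fin 2)) :=
        lt_of_le_of_ne (le_of_not_gt hcase) hne
      refine ⟨?_, ?_, lt_trans h1 hvert⟩ <;> simp [dshift] <;> omega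
  · rintro ⟨i1, j1⟩ hp1 ⟨i2, j2⟩ hp2 heq
    simp only [hS, Finset.mem_coe, Finset.mem_sigma, Finset.mem_range] at hp1 hp2
    obtain ⟨hi1, hj1⟩ := hp1
    obtain ⟨hi2, hj2⟩ := hp2
    have e1 : (m - 1 - i1) % m = m - 1 - i1 := Nat.mod_eq_of_lt (by omega)
    have e2 : (m - 1 - i2) % m = m - 1 - i2 := Nat.mod_eq_of_lt (by omega)
    have e3 : j1 % m = j1 := Nat.mod_eq_of_lt (by omega)
    have e4 : j2 % m = j2 := Nat.mod_eq_of_lt (by omega)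
    simp only [hf] at heq
    split_ifs at heq <;>
      simp only [Prod.mk.injEq, Fin.mk.injEq, e1, e2, e3, e4] at heq
    · obtain ⟨⟨hj, _⟩, hi, _⟩ := heq
      have : i1 = i2 := by omega
      subst this
      have : j1 = j2 := by omega
      subst this
      rfl
    · exact absurd heq.1.2 (by decide)
    · exact absurd heq.1.2 (by decide)
    · obtain ⟨⟨hi, _⟩, hj, _⟩ := heq
      have : i1 = i2 := by omega
      subst this
      have : j1 = j2 := by omega
      subst this
      rfl
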